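/- Let ⟨G, h, g⟩ be a hat guessing game where vertex A is adjacent to all other vertices, h(A) = s+1, and g(A) = s. Let G' = G \ A and consider the game ⟨G', h|_{V(G')}, (s+1)·g|_{V(G')}⟩. Then ⟨G, h, g⟩ is winning if and only if the game on G' is winning. -/

import Mathlib

/-- A winning strategy in the hat guessing game `⟨G, h, g⟩`: each sage `v` deterministically
outputs at most `g v` guesses depending only on the hat colors of its neighbors, and for
every hat assignment (with `c v < h v`) some sage's guess set contains its own color. -/
def HatWinning {V : Type*} (G : SimpleGraph V) (h g : V → ℕ) : Prop :=
  ∃ σ : V → (V → ℕ) → Finset ℕ,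
    (∀ v c c', (∀ u, G.Adj v u → c u = c' u) → σ v c = σ v c') ∧
    (∀ v c, (σ v c).card ≤ g v) ∧
    ∀ c : V → ℕ, (∀ v, c v < h v) → ∃ v, c v ∈ σ v c

/-- The hat guessing game played by the sages occupying the vertices of `S` only
(the game on the induced subgraph `G[S]`). -/
def HatWinningOn {V : Type*} (G : SimpleGraph V) (S : Set V) (h g : V → ℕ) : Prop :=
  ∃ σ : V → (V → ℕ) → Finset ℕ,
    (∀ v ∈ S, ∀ c c', (∀ u ∈ S, G.Adj v u → c u = c' u) → σ v c = σ v c') ∧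
    (∀ v ∈ S, ∀ c, (σ v c).card ≤ g v) ∧
    ∀ c : V → ℕ, (∀ v ∈ S, c v < h v) → ∃ v ∈ S, c v ∈ σ v c

/-- The `a`-th block of size `k` of the finset `t` (in increasing order). -/
def hatBlock (k : ℕ) (t : Finset ℕ) (a : ℕ) : Finset ℕ :=
  (((t.sort (· ≤ ·)).drop (a * k)).take k).toFinset

lemma hatBlock_card (k : ℕ) (t : Finset ℕ) (a : ℕ) : (hatBlock k t a).card ≤ k := by
  refine (List.toFinset_card_le _).trans ?_
  rw [List.length_take]
  omega

lemma hatBlock_cover {k s : ℕ} {t : Finset ℕ} (hc : t.card ≤ (s + 1) * k)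
    {x : ℕ} (hx : x ∈ t) : ∃ a < s + 1, x ∈ hatBlock k t a := by
  have hk : 0 < k := by
    rcases Nat.eq_zero_or_pos k with rfl | hk
    · simp at hc
      simp [hc] at hx
    · exact hk
  set L := t.sort (· ≤ ·) with hL
  have hxL : x ∈ L := (Finset.mem_sort _).2 hx
  obtain ⟨i, hi, hgi⟩ := List.getElem_of_mem hxL
  have hlen : L.length = t.card := Finset.length_sort _
  refine ⟨i / k, (Nat.div_lt_iff_lt_mul hk).2 (by omega), ?_⟩
  rw [hatBlock, List.mem_toFinset]
  have hdm : k * (i / k) + i % k = i := Nat.div_add_mod i k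
  have hcm : i / k * k = k * (i / k) := Nat.mul_comm _ _
  have hmk : i % k < k := Nat.mod_lt _ hk
  have h1 : i % k < (L.drop (i / k * k)).length := by
    rw [List.length_drop]; omega
  have h2 : i % k < ((L.drop (i / k * k)).take k).length := by
    rw [List.length_take, List.length_drop]; omega
  have hidx : i / k * k + i % k = i := by omega
  have : ((L.drop (i / k * k)).take k)[i % k]'h2 = x := by
    simp only [List.getElem_take, List.getElem_drop, hidx]
    exact hgi
  exact this ▸ List.getElem_mem h2

/-- If `A` is adjacent to all other vertices, `h A = s+1` and `g A = s`, then
the game on `G` is winning iff the game on `G \ A` with guessing function `(s+1)·g` is winning. -/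
theorem strong_dominating_vertex_removal {V : Type*} (G : SimpleGraph V) (h g : V → ℕ)
    (A : V) (s : ℕ) (hadj : ∀ x, x ≠ A → G.Adj A x) (hA : h A = s + 1) (hgA : g A = s) :
    HatWinning G h g ↔ HatWinningOn G {x | x ≠ A} h (fun x => (s + 1) * g x) := by
  classical
  constructor
  · rintro ⟨σ, hdep, hcard, hwin⟩
    refine ⟨fun v c => (Finset.range (s + 1)).biUnion (fun a => σ v (Function.update c A a)),
      ?_, ?_, ?_⟩
    · intro v hv c c' hagree
      apply Finset.biUnion_congr rfl
      intro a _
      apply hdep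
      intro u hu
      by_cases huA : u = A
      · subst huA; simp
      · rw [Function.update_of_ne huA, Function.update_of_ne huA]
        exact hagree u huA hu
    · intro v hv c
      calc ((Finset.range (s + 1)).biUnion fun a => σ v (Function.update c A a)).card
          ≤ ∑ a ∈ Finset.range (s + 1), (σ v (Function.update c A a)).card :=
            Finset.card_biUnion_le
        _ ≤ ∑ _a ∈ Finset.range (s + 1), g v :=
            Finset.sum_le_sum fun a _ => hcard v _
        _ = (s + 1) * g v := by simp [Finset.sum_const, mul_comm]
    · intro c hc
      have hA0 : (σ A (Function.update c A 0)).card ≤ s := hgA ▸ hcard A _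
      have hsub : ¬ (Finset.range (s + 1) ⊆ σ A (Function.update c A 0)) := by
        intro hsub
        have := Finset.card_le_card hsub
        simp at this; omega
      obtain ⟨a, ha, hna⟩ := Finset.not_subset.1 hsub
      rw [Finset.mem_range] at ha
      set c' := Function.update c A a with hc'
      have hvalid : ∀ v, c' v < h v := by
        intro v
        by_cases hv : v = A
        · subst hv; simpa [hc', hA] using ha
        · rw [hc', Function.update_of_ne hv]; exact hc v hv
      obtain ⟨v, hv⟩ := hwin c' hvalid
      have hvA : v ≠ A := by
        rintro rfl
        have heq : σ v c' = σ v (Function.update c v 0) := by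
          apply hdep
          intro u hu
          have huv : u ≠ v := fun e => G.irrefl (e ▸ hu)
          rw [hc', Function.update_of_ne huv, Function.update_of_ne huv]
        rw [heq] at hv
        simp [hc'] at hv
        exact hna hv
      refine ⟨v, hvA, Finset.mem_biUnion.2 ⟨a, Finset.mem_range.2 ha, ?_⟩⟩
      have : c v = c' v := by rw [hc', Function.update_of_ne hvA]
      rw [this]; exact hv
  · rintro ⟨τ, hdep, hcard, hwin⟩
    -- `cov c a`: color `a` for `A` is covered by some sage's block
    set cov : (V → ℕ) → ℕ → Prop :=
      fun c a => ∃ v, v ≠ A ∧ c v ∈ hatBlock (g v) (τ v c) a with hcov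
    set Fil : (V → ℕ) → Finset ℕ :=
      fun c => (Finset.range (s + 1)).filter (fun a => ¬ cov c a) with hFil
    refine ⟨fun v c =>
      if hvA : v = A then
        (if (Fil (Function.update c A 0)).card ≤ s then Fil (Function.update c A 0) else ∅)
      else hatBlock (g v) (τ v (Function.update c A 0)) (c A), ?_, ?_, ?_⟩
    · intro v c c' hagree
      by_cases hvA : v = A
      · subst hvA
        have heq : Function.update c v 0 = Function.update c' v 0 := by
          funext u
          by_cases huA : u = v
          · subst huA; simp
          · rw [Function.update_of_ne huA, Function.update_of_ne huA]
            exact hagree u (hadj u huA)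
        simp [heq]
      · have hcA : c A = c' A := hagree A ((hadj v hvA).symm)
        have hτ : τ v (Function.update c A 0) = τ v (Function.update c' A 0) := by
          apply hdep v hvA
          intro u hu huv
          rw [Function.update_of_ne hu, Function.update_of_ne hu]
          exact hagree u huv
        simp [hvA, hτ, hcA]
    · intro v c
      by_cases hvA : v = A
      · subst hvA
        rw [hgA]
        simp only [dif_pos rfl]
        by_cases hcc : (Fil (Function.update c v 0)).card ≤ s
        · rw [if_pos hcc]; exact hcc
        · rw [if_neg hcc]; simp
      · simp only [dif_neg hvA]
        exact hatBlock_card _ _ _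
    · intro c hc
      set c0 := Function.update c A 0 with hc0
      have hc0v : ∀ v, v ≠ A → c0 v = c v := fun v hv => Function.update_of_ne hv _ _
      have hτwin : ∃ v ∈ {x | x ≠ A}, c0 v ∈ τ v c0 := by
        apply hwin
        intro v hv
        rw [hc0v v hv]
        exact hc v
      obtain ⟨v0, hv0, hmem⟩ := hτwin
      obtain ⟨a0, ha0, hblk⟩ := hatBlock_cover (hcard v0 hv0 c0) hmem
      have hcova0 : cov c0 a0 := ⟨v0, hv0, hblk⟩
      have hFcard : (Fil c0).card ≤ s := by
        have hss : Fil c0 ⊂ Finset.range (s + 1) := by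
          rw [Finset.ssubset_iff_of_subset (Finset.filter_subset _ _)]
          exact ⟨a0, Finset.mem_range.2 ha0, by simp [hFil, hcova0, ha0]⟩
        have := Finset.card_lt_card hss
        simp at this; omega
      by_cases hguess : c A ∈ Fil c0
      · exact ⟨A, by simp [hc0, hFcard, hguess]; rw [← hc0, if_pos hFcard]; exact hguess⟩
      · have hcA : c A < s + 1 := hA ▸ hc A
        have : cov c0 (c A) := by
          by_contra hnc
          exact hguess (Finset.mem_filter.2 ⟨Finset.mem_range.2 hcA, hnc⟩)
        obtain ⟨v, hvA, hvb⟩ := this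
        refine ⟨v, ?_⟩
        rw [← hc0v v hvA]
        simpa [hvA, hc0] using hvb
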